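/- If A and B are finite nonempty subsets of an abelian group G with |A + B| ≤ K·|A| for some real K ≥ 1, then for every real δ with 0 < δ < 1 there exists a nonempty subset X ⊆ A with |X| ≥ (1-δ)·|A| such that for every positive integer k, |X + kB| ≤ (K/δ)^k · |X|, where kB denotes the k-fold sumset B + B + ... + B. -/

import Mathlib

open Finset Pointwise

private lemma petridis_pow {G : Type*} [AddCommGroup G] [DecidableEq G]
    (X B : Finset G) (hX : X.Nonempty)
    (h : ∀ X' ⊆ X, (X + B).card * X'.card ≤ (X' + B).card * X.card) :
    ∀ n : ℕ, ((X + n • B).card : ℝ) ≤ (((X + B).card : ℝ) / X.card) ^ n * X.card := by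
  have hX0 : (0 : ℝ) < X.card := by exact_mod_cast hX.card_pos
  intro n
  induction n with
  | zero => simp
  | succ n ih =>
      have key : ((X + B + n • B).card : ℝ) * X.card ≤ (X + B).card * (X + n • B).card := by
        have key0 := Finset.pluennecke_petridis_inequality_add (n • B) h
        rw [show n • B + X + B = X + B + n • B by abel, show n • B + X = X + n • B by abel] at key0
        exact_mod_cast key0
      have hrw : X + (n + 1) • B = X + B + n • B := by
        rw [succ_nsmul]; abel_nf
      rw [hrw]
      have h1 : ((X + B + n • B).card : ℝ) ≤ (X + B).card * (X + n • B).card / X.card := by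
        rw [le_div_iff₀ hX0]; exact key
      calc ((X + B + n • B).card : ℝ)
          ≤ (X + B).card * (X + n • B).card / X.card := h1
        _ ≤ (X + B).card * ((((X + B).card : ℝ) / X.card) ^ n * X.card) / X.card := by
            gcongr
        _ = (((X + B).card : ℝ) / X.card) ^ (n + 1) * X.card := by
            rw [mul_div_assoc, mul_div_cancel_right₀ _ hX0.ne', pow_succ, mul_assoc,
              div_mul_cancel₀ _ hX0.ne']; ring

private lemma ratio_min {G : Type*} [AddCommGroup G] [DecidableEq G]
    (C B : Finset G) (hC : C.Nonempty) (r : ℝ) (hr : 0 ≤ r)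
    (hCB : ((C + B).card : ℝ) ≤ r * C.card) :
    ∃ Y ⊆ C, Y.Nonempty ∧ ∀ n : ℕ, ((Y + n • B).card : ℝ) ≤ r ^ n * Y.card := by
  have hC' : C ∈ C.powerset.erase ∅ :=
    mem_erase_of_ne_of_mem hC.ne_empty (mem_powerset_self _)
  obtain ⟨Y, hY, hYmin⟩ :=
    exists_min_image (C.powerset.erase ∅) (fun Y ↦ ((Y + B).card : ℝ) / Y.card) ⟨C, hC'⟩
  rw [mem_erase, mem_powerset, ← nonempty_iff_ne_empty] at hY
  obtain ⟨hYne, hYC⟩ := hY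
  have hY0 : (0 : ℝ) < Y.card := by exact_mod_cast hYne.card_pos
  have hC0 : (0 : ℝ) < C.card := by exact_mod_cast hC.card_pos
  have hPet : ∀ Y' ⊆ Y, (Y + B).card * Y'.card ≤ (Y' + B).card * Y.card := by
    intro Y' hY'
    rcases Y'.eq_empty_or_nonempty with rfl | hY'ne
    · simp
    have hY'0 : (0 : ℝ) < Y'.card := by exact_mod_cast hY'ne.card_pos
    have := hYmin Y' (mem_erase_of_ne_of_mem hY'ne.ne_empty
      (mem_powerset.2 (hY'.trans hYC)))
    have : ((Y + B).card : ℝ) * Y'.card ≤ ((Y' + B).card : ℝ) * Y.card := by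
      rw [div_le_div_iff₀ hY0 hY'0] at this
      linarith
    exact_mod_cast this
  refine ⟨Y, hYC, hYne, fun n => ?_⟩
  have hratio : ((Y + B).card : ℝ) / Y.card ≤ r := by
    have h1 : ((Y + B).card : ℝ) / Y.card ≤ ((C + B).card : ℝ) / C.card := hYmin C hC'
    have h2 : ((C + B).card : ℝ) / C.card ≤ r := by
      exact (div_le_iff₀ hC0).2 hCB
    linarith
  calc ((Y + n • B).card : ℝ)
      ≤ (((Y + B).card : ℝ) / Y.card) ^ n * Y.card := petridis_pow Y B hYne hPet n
    _ ≤ r ^ n * Y.card := by gcongr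

theorem stmt_11 {G : Type*} [AddCommGroup G] [DecidableEq G]
    (A B : Finset G) (hA : A.Nonempty) (hB : B.Nonempty) (K : ℝ) (hK : 1 ≤ K)
    (hAB : ((A + B).card : ℝ) ≤ K * A.card) :
    ∀ δ : ℝ, 0 < δ → δ < 1 →
      ∃ X : Finset G, X ⊆ A ∧ X.Nonempty ∧ (1 - δ) * (A.card : ℝ) ≤ X.card ∧
        ∀ k : ℕ, 0 < k → ((X + k • B).card : ℝ) ≤ (K / δ) ^ k * X.card := by
  intro δ hδ0 hδ1
  classical
  set r : ℝ := K / δ with hr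
  have hr1 : 1 ≤ r := by
    rw [hr, le_div_iff₀ hδ0]; nlinarith
  have hr0 : 0 ≤ r := by linarith
  have hA0 : (0 : ℝ) < A.card := by exact_mod_cast hA.card_pos
  -- family of good subsets
  set F : Finset (Finset G) :=
    A.powerset.filter (fun X => ∀ k : ℕ, ((X + k • B).card : ℝ) ≤ r ^ k * X.card) with hF
  have hemp : ∅ ∈ F := by
    simp only [hF, mem_filter, mem_powerset]
    refine ⟨empty_subset _, fun k => ?_⟩
    simp
  obtain ⟨X, hXF, hXmax⟩ := exists_max_image F (fun X => X.card) ⟨∅, hemp⟩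
  simp only [hF, mem_filter, mem_powerset] at hXF
  obtain ⟨hXA, hXgood⟩ := hXF
  -- X is large
  have hlarge : (1 - δ) * (A.card : ℝ) ≤ X.card := by
    by_contra hcon
    push_neg at hcon
    set C := A \ X with hC
    have hCcard : (C.card : ℝ) = A.card - X.card := by
      rw [hC, card_sdiff_of_subset hXA, Nat.cast_sub (card_le_card hXA)]
    have hCpos : (0 : ℝ) < C.card := by
      rw [hCcard]; nlinarith
    have hCne : C.Nonempty := by
      rw [← card_pos]; exact_mod_cast hCpos
    have hCB : ((C + B).card : ℝ) ≤ r * C.card := by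
      have h1 : ((C + B).card : ℝ) ≤ (A + B).card := by
        exact_mod_cast card_le_card (add_subset_add_right (sdiff_subset))
      have h2 : δ * (A.card : ℝ) < C.card := by
        rw [hCcard]; nlinarith
      have : K * (A.card : ℝ) ≤ r * C.card := by
        rw [hr]
        rw [div_mul_eq_mul_div, le_div_iff₀ hδ0]
        nlinarith
      linarith
    obtain ⟨Y, hYC, hYne, hYgood⟩ := ratio_min C B hCne r hr0 hCB
    have hdisj : Disjoint X Y := by
      exact Finset.disjoint_left.2 fun a haX haY => (Finset.mem_sdiff.1 (hYC haY)).2 haX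
    have hXY : X ∪ Y ∈ F := by
      simp only [hF, mem_filter, mem_powerset]
      refine ⟨union_subset hXA (hYC.trans sdiff_subset), fun k => ?_⟩
      have hsplit : (X ∪ Y) + k • B = (X + k • B) ∪ (Y + k • B) := by
        rw [union_add]
      rw [hsplit]
      have hcard : (((X + k • B) ∪ (Y + k • B)).card : ℝ)
          ≤ ((X + k • B).card : ℝ) + (Y + k • B).card := by
        exact_mod_cast card_union_le _ _
      have hu : ((X ∪ Y).card : ℝ) = X.card + Y.card := by
        exact_mod_cast card_union_of_disjoint hdisj
      calc (((X + k • B) ∪ (Y + k • B)).card : ℝ)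
          ≤ ((X + k • B).card : ℝ) + (Y + k • B).card := hcard
        _ ≤ r ^ k * X.card + r ^ k * Y.card := add_le_add (hXgood k) (hYgood k)
        _ = r ^ k * (X ∪ Y).card := by rw [hu]; ring
    have := hXmax _ hXY
    have hucard : (X ∪ Y).card = X.card + Y.card := card_union_of_disjoint hdisj
    have := hYne.card_pos
    omega
  have hXne : X.Nonempty := by
    rw [← card_pos]
    by_contra h
    push_neg at h
    interval_cases hXc : X.card
    · simp only [Nat.cast_zero] at hlarge
      nlinarith
  exact ⟨X, hXA, hXne, hlarge, fun k _ => hXgood k⟩
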